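/- arXiv:2303.12716 — 2 statements merged into one kernel-verified Lean document; each statement's English description precedes it below -/
import Mathlib

section
/- If α is an irrational number not equivalent to the golden ratio (1+√5)/2, then 𝔨(α) ≤ 4/√17. -/
open Filter

/-- The tails `αₙ = [aₙ; aₙ₊₁, …]` of the continued fraction of `α`. -/
noncomputable def cfTail (α : ℝ) : ℕ → ℝ
  | 0 => α
  | n + 1 => (Int.fract (cfTail α n))⁻¹

/-- The partial quotients `aₙ` of the continued fraction of `α`. -/
noncomputable def cfDigit (α : ℝ) (n : ℕ) : ℤ := ⌊cfTail α n⌋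

/-- Value `[a; b, c, …]` of a finite continued fraction given by a list. -/
noncomputable def finCF : List ℤ → ℝ
  | [] => 0
  | a :: l => (a : ℝ) + (finCF l)⁻¹

/-- `α*ₙ = [0; aₙ, aₙ₋₁, …, a₁]`. -/
noncomputable def cfStar (α : ℝ) (n : ℕ) : ℝ :=
  (finCF (((List.range' 1 n).reverse).map (cfDigit α)))⁻¹

/-- Numerators `pₙ` of the convergents of `α`. -/
noncomputable def cfNum (α : ℝ) : ℕ → ℤ
  | 0 => cfDigit α 0
  | 1 => cfDigit α 1 * cfDigit α 0 + 1
  | n + 2 => cfDigit α (n + 2) * cfNum α (n + 1) + cfNum α n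

/-- Denominators `qₙ` of the convergents of `α`. -/
noncomputable def cfDen (α : ℝ) : ℕ → ℤ
  | 0 => 1
  | 1 => cfDigit α 1
  | n + 2 => cfDigit α (n + 2) * cfDen α (n + 1) + cfDen α n

/-- The irrationality measure function `ψ_α^[2]` for "second best" approximations. -/
noncomputable def psi2 (α : ℝ) (t : ℝ) : ℝ :=
  sInf { x : ℝ | ∃ p q : ℤ, 1 ≤ q ∧ (q : ℝ) ≤ t ∧
    (∀ n : ℕ, (p, q) ≠ (cfNum α n, cfDen α n)) ∧ x = |(q : ℝ) * α - (p : ℝ)| }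

/-- The Diophantine constant `𝔨(α) = liminf_{t → ∞} t · ψ_α^[2](t)`. -/
noncomputable def kConst (α : ℝ) : ℝ := liminf (fun t : ℝ => t * psi2 α t) atTop

/-- Two numbers are equivalent if the tails of their continued fraction expansions
coincide: `a_{n+k} = b_{m+k}` for all `k ≥ 1`, for some positive integers `m`, `n`. -/
def CFEquiv (α β : ℝ) : Prop :=
  ∃ n m : ℕ, 0 < n ∧ 0 < m ∧ ∀ k : ℕ, 0 < k → cfDigit α (n + k) = cfDigit β (m + k)

/-- The spectrum `𝕃₂` of values of `𝔨`. -/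
def L2 : Set ℝ := { l : ℝ | ∃ α : ℝ, Irrational α ∧ l = kConst α }

/-- `κ¹ₙ(α) = (1 + α*ₙ₋₁)(αₙ − 1)/(αₙ + α*ₙ₋₁)`. -/
noncomputable def kappa1 (α : ℝ) (n : ℕ) : ℝ :=
  (1 + cfStar α (n - 1)) * (cfTail α n - 1) / (cfTail α n + cfStar α (n - 1))

/-- `κ²ₙ(α) = (1 − α*ₙ)(αₙ₊₁ + 1)/(αₙ₊₁ + α*ₙ)`. -/
noncomputable def kappa2 (α : ℝ) (n : ℕ) : ℝ :=
  (1 - cfStar α n) * (cfTail α (n + 1) + 1) / (cfTail α (n + 1) + cfStar α n)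

/-- `κ⁴ₙ(α) = 4/(αₙ + α*ₙ₋₁)`. -/
noncomputable def kappa4 (α : ℝ) (n : ℕ) : ℝ :=
  4 / (cfTail α n + cfStar α (n - 1))

variable {α : ℝ}

lemma tail_irr (hα : Irrational α) : ∀ n, Irrational (cfTail α n)
  | 0 => hα
  | n + 1 => by
    have h := tail_irr hα n
    have : Irrational (Int.fract (cfTail α n)) := by
      rw [Int.fract]
      exact Irrational.sub_intCast h _
    exact this.inv

lemma fract_tail_pos (hα : Irrational α) (n : ℕ) : 0 < Int.fract (cfTail α n) := by
  rcases (Int.fract_nonneg (cfTail α n)).lt_or_eq with h | h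
  · exact h
  · exfalso
    have := (tail_irr hα n).ne_int ⌊cfTail α n⌋
    rw [Int.fract] at h
    exact this (by linarith)

lemma tail_gt_one (hα : Irrational α) (n : ℕ) : 1 < cfTail α (n + 1) := by
  rw [show cfTail α (n+1) = (Int.fract (cfTail α n))⁻¹ from rfl]
  exact one_lt_inv_iff₀.2 ⟨fract_tail_pos hα n, Int.fract_lt_one _⟩

lemma tail_pos (hα : Irrational α) (n : ℕ) (hn : 1 ≤ n) : 0 < cfTail α n := by
  obtain ⟨m, rfl⟩ := Nat.exists_eq_add_of_le hn
  rw [Nat.add_comm]; exact lt_trans one_pos (tail_gt_one hα m)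

lemma tail_eq (n : ℕ) : cfTail α n = cfDigit α n + (cfTail α (n + 1))⁻¹ := by
  rw [cfDigit, show cfTail α (n+1) = (Int.fract (cfTail α n))⁻¹ from rfl, inv_inv, Int.fract]
  ring

lemma digit_ge_one (hα : Irrational α) (n : ℕ) : 1 ≤ cfDigit α (n + 1) := by
  have := tail_gt_one hα n
  rw [cfDigit]
  exact Int.le_floor.2 (by exact_mod_cast this.le)


lemma den_rec (n : ℕ) : cfDen α (n+2) = cfDigit α (n+2) * cfDen α (n+1) + cfDen α n := rfl
lemma num_rec (n : ℕ) : cfNum α (n+2) = cfDigit α (n+2) * cfNum α (n+1) + cfNum α n := rfl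

lemma den_ge_one (hα : Irrational α) : ∀ n, 1 ≤ cfDen α n := by
  have key : ∀ n, 1 ≤ cfDen α n ∧ 1 ≤ cfDen α (n+1) := by
    intro n
    induction n with
    | zero => exact ⟨le_refl 1, digit_ge_one hα 0⟩
    | succ m ih =>
      refine ⟨ih.2, ?_⟩
      rw [den_rec]
      have h1 := digit_ge_one hα (m+1)
      nlinarith [ih.1, ih.2]
  exact fun n => (key n).1

lemma den_succ_le (hα : Irrational α) (n : ℕ) : cfDen α n ≤ cfDen α (n+1) := by
  cases n with
  | zero => exact digit_ge_one hα 0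
  | succ m =>
    rw [den_rec]
    have h1 := digit_ge_one hα (m+1)
    nlinarith [den_ge_one hα m, den_ge_one hα (m+1)]

lemma den_mono (hα : Irrational α) : Monotone (cfDen α) :=
  monotone_nat_of_le_succ (den_succ_le hα)

lemma den_strict (hα : Irrational α) (n : ℕ) : cfDen α (n+1) + 1 ≤ cfDen α (n+2) := by
  rw [den_rec]
  have h1 := digit_ge_one hα (n+1)
  nlinarith [den_ge_one hα n, den_ge_one hα (n+1)]

lemma den_ge_index (hα : Irrational α) (n : ℕ) : (n : ℤ) ≤ cfDen α (n+1) := by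
  induction n with
  | zero => simpa using le_trans zero_le_one (den_ge_one hα 1)
  | succ m ih =>
    have h := den_strict hα m
    have : cfDen α (m+1+1) = cfDen α (m+2) := rfl
    omega

lemma det (hα : Irrational α) : ∀ n, cfDen α (n+1) * cfNum α n - cfNum α (n+1) * cfDen α n = (-1)^(n+1)
  | 0 => by
    show cfDigit α 1 * cfDigit α 0 - (cfDigit α 1 * cfDigit α 0 + 1) * 1 = (-1)^1
    ring
  | n+1 => by
    have ih := det hα n
    rw [den_rec, num_rec]
    have : (-1 : ℤ)^(n+2) = -(-1)^(n+1) := by ring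
    rw [this, ← ih]; ring

lemma tail_ne_zero (hα : Irrational α) (n : ℕ) : cfTail α (n+1) ≠ 0 :=
  ne_of_gt (lt_trans one_pos (tail_gt_one hα n))

lemma key_id (hα : Irrational α) : ∀ n : ℕ,
    α * ((cfDen α (n+1) : ℝ) * cfTail α (n+2) + (cfDen α n : ℝ))
      = (cfNum α (n+1) : ℝ) * cfTail α (n+2) + (cfNum α n : ℝ)
  | 0 => by
    have h1 : cfTail α 1 ≠ 0 := tail_ne_zero hα 0
    have h2 : cfTail α 2 ≠ 0 := tail_ne_zero hα 1
    have e0 : α = (cfDigit α 0 : ℝ) + (cfTail α 1)⁻¹ := tail_eq 0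
    have e1 : cfTail α 1 = (cfDigit α 1 : ℝ) + (cfTail α 2)⁻¹ := tail_eq 1
    show α * ((cfDigit α 1 : ℝ) * cfTail α 2 + ((1:ℤ):ℝ))
      = ((cfDigit α 1 * cfDigit α 0 + 1 : ℤ) : ℝ) * cfTail α 2 + (cfDigit α 0 : ℝ)
    push_cast
    set y := cfTail α 2 with hy
    set x := cfTail α 1 with hxd
    set a0 : ℝ := (cfDigit α 0 : ℝ) with ha0
    set a1 : ℝ := (cfDigit α 1 : ℝ) with ha1
    have e0' : α * x = a0 * x + 1 := by rw [e0]; field_simp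
    have e1' : x * y = a1 * y + 1 := by rw [e1]; field_simp
    linear_combination y * e0' - α * e1' + a0 * e1'
  | n+1 => by
    have ih := key_id hα n
    have hx : cfTail α (n+3) ≠ 0 := tail_ne_zero hα (n+2)
    have ht : cfTail α (n+2) = (cfDigit α (n+2) : ℝ) + (cfTail α (n+3))⁻¹ := tail_eq (n+2)
    rw [ht] at ih
    rw [show n+1+1 = n+2 from rfl, show n+1+2 = n+3 from rfl, den_rec, num_rec]
    push_cast
    field_simp at ih ⊢
    linear_combination ih

lemma err (hα : Irrational α) (n : ℕ) :
    ((cfDen α (n+1) : ℝ) * α - (cfNum α (n+1) : ℝ))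
      * ((cfDen α (n+1) : ℝ) * cfTail α (n+2) + (cfDen α n : ℝ)) = (-1)^(n+1) := by
  have hk := key_id hα n
  have hdr : (cfDen α (n+1) : ℝ) * (cfNum α n : ℝ) - (cfNum α (n+1) : ℝ) * (cfDen α n : ℝ)
      = (-1)^(n+1) := by exact_mod_cast det hα n
  linear_combination (cfDen α (n+1) : ℝ) * hk + hdr

lemma Bpos (hα : Irrational α) (n : ℕ) :
    0 < (cfDen α (n+1) : ℝ) * cfTail α (n+2) + (cfDen α n : ℝ) := by
  have h1 : (1:ℝ) ≤ (cfDen α (n+1) : ℝ) := by exact_mod_cast den_ge_one hα (n+1)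
  have h0 : (1:ℝ) ≤ (cfDen α n : ℝ) := by exact_mod_cast den_ge_one hα n
  nlinarith [tail_gt_one hα (n+1)]

lemma Bmul (hα : Irrational α) (n : ℕ) :
    (cfDen α (n+2) : ℝ) * cfTail α (n+3) + (cfDen α (n+1) : ℝ)
      = ((cfDen α (n+1) : ℝ) * cfTail α (n+2) + (cfDen α n : ℝ)) * cfTail α (n+3) := by
  have hx : cfTail α (n+3) ≠ 0 := tail_ne_zero hα (n+2)
  rw [den_rec, tail_eq (n+2)]
  push_cast
  field_simp
  ring

lemma not_conv_double (hα : Irrational α) (k : ℕ) (m : ℕ) :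
    (2 * cfNum α k, 2 * cfDen α k) ≠ (cfNum α m, cfDen α m) := by
  intro h
  rw [Prod.mk.injEq] at h
  have hd := det hα m
  rw [← h.1, ← h.2] at hd
  have h2 : (2:ℤ) ∣ (-1)^(m+1) :=
    ⟨cfDen α (m+1) * cfNum α k - cfNum α (m+1) * cfDen α k, by linear_combination -hd⟩
  rcases Nat.even_or_odd (m+1) with he | ho
  · rw [he.neg_one_pow] at h2; norm_num at h2
  · rw [ho.neg_one_pow] at h2; norm_num at h2

lemma not_conv_between (hα : Irrational α) {p q : ℤ} {j : ℕ}
    (h1 : cfDen α j < q) (h2 : q < cfDen α (j+1)) (m : ℕ) :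
    (p, q) ≠ (cfNum α m, cfDen α m) := by
  intro h
  rw [Prod.mk.injEq] at h
  rcases le_or_gt m j with hm | hm
  · have := den_mono hα hm
    omega
  · have := den_mono hα (show j+1 ≤ m from hm)
    omega

lemma psi2_nonneg (α t : ℝ) : 0 ≤ psi2 α t := by
  apply Real.sInf_nonneg
  rintro x ⟨p, q, -, -, -, rfl⟩
  exact abs_nonneg _

lemma psi2_le {p q : ℤ} {t : ℝ} (hq : 1 ≤ q) (hqt : (q : ℝ) ≤ t)
    (hne : ∀ n, (p, q) ≠ (cfNum α n, cfDen α n)) :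
    psi2 α t ≤ |(q : ℝ) * α - (p : ℝ)| := by
  apply csInf_le
  · exact ⟨0, by rintro x ⟨p', q', -, -, -, rfl⟩; exact abs_nonneg _⟩
  · exact ⟨p, q, hq, hqt, hne, rfl⟩

lemma gold_bounds : 1 < (1 + Real.sqrt 5) / 2 ∧ (1 + Real.sqrt 5) / 2 < 2 := by
  have h1 : (2:ℝ) < Real.sqrt 5 := by
    rw [show (2:ℝ) = Real.sqrt 4 by rw [show (4:ℝ) = 2^2 by norm_num, Real.sqrt_sq]; norm_num]
    exact Real.sqrt_lt_sqrt (by norm_num) (by norm_num)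
  have h2 : Real.sqrt 5 < 3 := by
    rw [show (3:ℝ) = Real.sqrt 9 by rw [show (9:ℝ) = 3^2 by norm_num, Real.sqrt_sq]; norm_num]
    exact Real.sqrt_lt_sqrt (by norm_num) (by norm_num)
  constructor <;> linarith

lemma gold_tail : ∀ n, cfTail ((1 + Real.sqrt 5) / 2) n = (1 + Real.sqrt 5) / 2
  | 0 => rfl
  | n + 1 => by
    have ih := gold_tail n
    have hb := gold_bounds
    have hfl : ⌊(1 + Real.sqrt 5) / 2⌋ = 1 := by
      rw [Int.floor_eq_iff]
      push_cast
      exact ⟨hb.1.le, by linarith [hb.2]⟩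
    have hs5 : Real.sqrt 5 ^ 2 = 5 := Real.sq_sqrt (by norm_num)
    show (Int.fract (cfTail ((1 + Real.sqrt 5) / 2) n))⁻¹ = (1 + Real.sqrt 5) / 2
    rw [ih, Int.fract, hfl]
    have hs5 : Real.sqrt 5 * Real.sqrt 5 = 5 := Real.mul_self_sqrt (by norm_num)
    have hne : (1 + Real.sqrt 5) / 2 - ((1:ℤ):ℝ) ≠ 0 := by push_cast; intro hc; nlinarith [hb.1]
    have hgoal : ((1 + Real.sqrt 5) / 2 - ((1:ℤ):ℝ)) * ((1 + Real.sqrt 5) / 2) = 1 := by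
      push_cast; nlinarith
    exact inv_eq_of_mul_eq_one_right hgoal

lemma gold_digit (n : ℕ) : cfDigit ((1 + Real.sqrt 5) / 2) n = 1 := by
  rw [cfDigit, gold_tail]
  rw [Int.floor_eq_iff]
  push_cast
  exact ⟨gold_bounds.1.le, by linarith [gold_bounds.2]⟩

lemma exists_big_digit (hα : Irrational α) (h : ¬ CFEquiv α ((1 + Real.sqrt 5) / 2))
    (N : ℕ) : ∃ j : ℕ, N + 3 ≤ j ∧ 2 ≤ cfDigit α j := by
  rw [CFEquiv] at h
  push_neg at h
  obtain ⟨k, hk0, hk⟩ := h (N + 2) 1 (by omega) (by omega)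
  refine ⟨N + 2 + k, by omega, ?_⟩
  rw [gold_digit] at hk
  have h1 : 1 ≤ cfDigit α (N + 2 + k) := by
    have : N + 2 + k = (N + 1 + k) + 1 := by omega
    rw [this]; exact digit_ge_one hα _
  omega

lemma core_ineq (s a q0 q1 v : ℝ) (hs : s^2 = 17) (hs4 : 4 < s)
    (haZ : a = 2 ∨ 3 ≤ a) (hq0 : 1 ≤ q0) (hq01 : q0 + 1 ≤ q1)
    (hv0 : 0 < v) (hv1 : v < 1)
    (H1 : q1 * (a + v) + q0 < q1 * s)
    (H2 : 4 * (q1 * (a + v) + q0) < s * ((q0 + q1) * (a + v - 1)))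
    (H3 : 4 * (q1 * (a + v) + q0) < s * ((a * q1 + q0 - q1) * (1 + v)))
    (H4 : a = 2 → v * (s + 1) ≤ s) : False := by
  have hs0 : 0 < s := by linarith
  have hq1 : 2 ≤ q1 := by linarith
  rcases haZ with ha2 | ha3
  · -- a = 2
    subst ha2
    have hv4 := H4 rfl
    have h10 : 0 ≤ q1 - 1 - q0 := by linarith
    nlinarith [mul_nonneg hv0.le h10, mul_nonneg (sub_nonneg.2 hv4) (by nlinarith : (0:ℝ) ≤ q1 * (4*s - 8) - 2*s), mul_pos hv0 (by linarith : (0:ℝ) < q1)]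
  · -- a ≥ 3
    have hq1p : (0:ℝ) < q1 := by linarith
    have ha0 : (0:ℝ) < a := by linarith
    have hWp : (0:ℝ) < q0 + q1 * v := by nlinarith
    have t1 : 0 ≤ q1 * s - q1 * a - (q0 + q1 * v) := by nlinarith
    have t2 : 0 ≤ s * (q0 + q1 * v) + q1 + a * s * q1 := by
      nlinarith [mul_pos hs0 hWp, mul_pos (mul_pos ha0 hs0) hq1p]
    have t3 : 0 ≤ (a - 1) * (a - 3) := by nlinarith
    have t4 : 0 ≤ s * ((a - 1) * (a - 3)) * q1 ^ 2 := by positivity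
    have hp : 0 ≤ (q1 * s - q1 * a - (q0 + q1 * v)) * (s * (q0 + q1 * v) + q1 + a * s * q1) :=
      mul_nonneg t1 t2
    have h17a : s ^ 2 * (q1 * (q0 + q1 * v)) = 17 * (q1 * (q0 + q1 * v)) := by rw [hs]
    have h17b : s ^ 2 * (a * q1 ^ 2) = 17 * (a * q1 ^ 2) := by rw [hs]
    have HS : 8 * (q1 * (a + v) + q0)
        < s * (2 * q1 * (a - 1) + a * (q0 + q1 * v) + 2 * q0 * v) := by
      nlinarith [H2, H3]
    have HSq : q1 * (8 * (q1 * (a + v) + q0))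
        < q1 * (s * (2 * q1 * (a - 1) + a * (q0 + q1 * v) + 2 * q0 * v)) :=
      mul_lt_mul_of_pos_left HS hq1p
    have hAM : 4 * q1 * q0 * v ≤ (q0 + q1 * v) ^ 2 := by nlinarith [sq_nonneg (q0 - q1 * v)]
    have hAMs : s * (4 * q1 * q0 * v) ≤ s * (q0 + q1 * v) ^ 2 :=
      mul_le_mul_of_nonneg_left hAM hs0.le
    nlinarith [HSq, hAMs, hp, t4, h17a, h17b]

lemma core_disj (s a q0 q1 x y B q2 : ℝ) (hs : s^2 = 17) (hs4 : 4 < s)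
    (haZ : a = 2 ∨ 3 ≤ a) (hq0 : 1 ≤ q0) (hq01 : q0 + 1 ≤ q1) (hy1 : 1 < y)
    (hx : x = a + y⁻¹) (hB : B = q1 * x + q0) (hq2 : q2 = a * q1 + q0) :
    4 * q1 / B ≤ 4 / s ∨ (q0 + q1) * (x - 1) / B ≤ 4 / s ∨
      (q2 - q1) * (y + 1) / (B * y) ≤ 4 / s ∨ (a = 2 ∧ y < 1 + 1/s) := by
  have hs0 : 0 < s := by linarith
  have ha2 : 2 ≤ a := by rcases haZ with h | h <;> linarith
  have hy0 : 0 < y := by linarith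
  have hv0 : 0 < y⁻¹ := inv_pos.2 hy0
  have hv1 : y⁻¹ < 1 := inv_lt_one_of_one_lt₀ hy1
  have hyv : y * y⁻¹ = 1 := mul_inv_cancel₀ (ne_of_gt hy0)
  have hBpos : 0 < B := by rw [hB, hx]; nlinarith
  by_contra hcon
  push_neg at hcon
  obtain ⟨c1, c2, c3, c4⟩ := hcon
  set v : ℝ := y⁻¹ with hv
  apply core_ineq s a q0 q1 v hs hs4 haZ hq0 hq01 hv0 hv1
  · have h := (div_lt_div_iff₀ hs0 hBpos).1 c1
    nlinarith [hB, hx]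
  · have h := (div_lt_div_iff₀ hs0 hBpos).1 c2
    have hxv : x - 1 = a + v - 1 := by rw [hx]
    rw [hxv, hB, hx] at h
    nlinarith
  · have h := (div_lt_div_iff₀ hs0 (mul_pos hBpos hy0)).1 c3
    have h2 := mul_lt_mul_of_pos_right h hv0
    have e1 : 4 * (B * y) * y⁻¹ = 4 * B := by
      rw [mul_assoc 4, mul_assoc B, hyv, mul_one]
    have e2 : (q2 - q1) * (y + 1) * s * y⁻¹ = s * ((a * q1 + q0 - q1) * (1 + v)) := by
      rw [hq2, hv]; field_simp
    rw [e1, e2] at h2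
    have hBv : q1 * (a + v) + q0 = B := by rw [hB, hx, hv]
    rw [hBv]; exact h2
  · intro ha2'
    have hy' : 1 + 1/s ≤ y := c4 ha2'
    have h1 : s + 1 ≤ s * y := by
      have := mul_le_mul_of_nonneg_left hy' hs0.le
      have hss : s * (1/s) = 1 := mul_one_div_cancel (ne_of_gt hs0)
      nlinarith
    have := mul_le_mul_of_nonneg_right h1 hv0.le
    have hsyv : s * y * v = s := by rw [hv, mul_assoc, hyv, mul_one]
    nlinarith

lemma sqrt17_lt : (4:ℝ) < Real.sqrt 17 := by
  rw [show (4:ℝ) = Real.sqrt 16 by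
    rw [show (16:ℝ) = 4^2 by norm_num, Real.sqrt_sq]; norm_num]
  exact Real.sqrt_lt_sqrt (by norm_num) (by norm_num)


lemma abs_err {E B ε : ℝ} (hB : 0 < B) (hε : |ε| = 1) (h : E * B = ε ∨ E * B = -ε) :
    |E| = 1 / B := by
  have habs : |E| * B = 1 := by
    have h' : |E * B| = 1 := by
      rcases h with h | h <;> rw [h] <;> simp [hε]
    rwa [abs_mul, abs_of_pos hB] at h'
  rw [eq_div_iff (ne_of_gt hB)]
  exact habs

lemma abs_err_sum {E0 E1 B0 B x ε : ℝ} (hB0 : 0 < B0) (hB : 0 < B) (hx : 1 < x)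
    (hε : |ε| = 1) (h0 : E0 * B0 = ε) (h1 : E1 * B = -ε) (hBx : B = B0 * x) :
    |E0 + E1| = (x - 1) / B := by
  have hsum : (E0 + E1) * (B0 * B) = ε * (B0 * (x - 1)) := by
    linear_combination B * h0 + B0 * h1 + ε * hBx
  have habs : |E0 + E1| * (B0 * B) = B0 * (x - 1) := by
    have h' := congrArg abs hsum
    rw [abs_mul (E0 + E1), abs_of_pos (mul_pos hB0 hB)] at h'
    rw [abs_mul ε, hε, one_mul, abs_of_nonneg (by nlinarith : (0:ℝ) ≤ B0 * (x - 1))] at h'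
    exact h'
  rw [eq_div_iff (ne_of_gt hB)]
  apply mul_left_cancel₀ (ne_of_gt hB0)
  linear_combination habs
lemma abs_err_diff {E1 E2 B B2 y ε : ℝ} (hB : 0 < B) (hB2 : 0 < B2) (hy : 0 < y)
    (hε : |ε| = 1) (h1 : E1 * B = -ε) (h2 : E2 * B2 = ε) (hB2y : B2 = B * y) :
    |E2 - E1| = (y + 1) / (B * y) := by
  have hsum : (E2 - E1) * (B * B2) = ε * (B + B2) := by
    linear_combination B * h2 - B2 * h1
  have habs : |E2 - E1| * (B * B2) = B + B2 := by
    have h' := congrArg abs hsum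
    rw [abs_mul (E2 - E1), abs_of_pos (mul_pos hB hB2)] at h'
    rw [abs_mul ε, hε, one_mul, abs_of_nonneg (by nlinarith : (0:ℝ) ≤ B + B2)] at h'
    exact h'
  rw [eq_div_iff (ne_of_gt (mul_pos hB hy))]
  apply mul_left_cancel₀ (ne_of_gt hB)
  rw [hB2y] at habs
  linear_combination habs

lemma case_double {qr pr B ε c a : ℝ} (hq : 0 ≤ qr) (hB : 0 < B) (hε : |ε| = 1)
    (hE : (qr * a - pr) * B = -ε) (hle : 4 * qr / B ≤ c) :
    (2 * qr) * |(2 * qr) * a - 2 * pr| ≤ c := by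
  have he : |qr * a - pr| = 1 / B := abs_err hB hε (Or.inr hE)
  have h2 : (2 * qr) * a - 2 * pr = 2 * (qr * a - pr) := by ring
  rw [h2, abs_mul, abs_of_nonneg (by norm_num : (0:ℝ) ≤ 2), he]
  calc 2 * qr * (2 * (1 / B)) = 4 * qr / B := by ring
    _ ≤ c := hle

lemma case_mediant {q0r q1r p0r p1r B0 B x ε c a : ℝ} (hB0 : 0 < B0) (hB : 0 < B)
    (hx : 1 < x) (hε : |ε| = 1) (hE0 : (q0r * a - p0r) * B0 = ε)
    (hE1 : (q1r * a - p1r) * B = -ε) (hBx : B = B0 * x)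
    (hle : (q0r + q1r) * (x - 1) / B ≤ c) :
    (q0r + q1r) * |(q0r + q1r) * a - (p0r + p1r)| ≤ c := by
  have he : |(q0r * a - p0r) + (q1r * a - p1r)| = (x - 1) / B :=
    abs_err_sum hB0 hB hx hε hE0 hE1 hBx
  have h2 : (q0r + q1r) * a - (p0r + p1r) = (q0r * a - p0r) + (q1r * a - p1r) := by ring
  rw [h2, he, mul_div_assoc'] at *
  exact hle

lemma case_diff {q1r q2r p1r p2r B B2 y ε c a : ℝ} (hB : 0 < B) (hB2 : 0 < B2)
    (hy : 0 < y) (hε : |ε| = 1) (hE1 : (q1r * a - p1r) * B = -ε)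
    (hE2 : (q2r * a - p2r) * B2 = ε) (hB2y : B2 = B * y)
    (hle : (q2r - q1r) * (y + 1) / (B * y) ≤ c) :
    (q2r - q1r) * |(q2r - q1r) * a - (p2r - p1r)| ≤ c := by
  have he : |(q2r * a - p2r) - (q1r * a - p1r)| = (y + 1) / (B * y) :=
    abs_err_diff hB hB2 hy hε hE1 hE2 hB2y
  have h2 : (q2r - q1r) * a - (p2r - p1r) = (q2r * a - p2r) - (q1r * a - p1r) := by ring
  rw [h2, he, mul_div_assoc'] at *
  exact hle

lemma neg_one_pow_abs (m : ℕ) : |(-1:ℝ)^m| = 1 := by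
  rw [abs_pow, abs_neg, abs_one, one_pow]

lemma exists_candidate (hα : Irrational α) (k : ℕ) (haD : 2 ≤ cfDigit α (k+3)) :
    ∃ p q : ℤ, cfDen α (k+2) ≤ q ∧ 1 ≤ q ∧
      (∀ m, (p, q) ≠ (cfNum α m, cfDen α m)) ∧
      (q:ℝ) * |(q:ℝ) * α - (p:ℝ)| ≤ 4 / Real.sqrt 17 := by
  have hs : (Real.sqrt 17)^2 = 17 := Real.sq_sqrt (by norm_num)
  have hs4 : 4 < Real.sqrt 17 := sqrt17_lt
  have hs0 : 0 < Real.sqrt 17 := by linarith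
  have hQ1 := den_ge_one hα (k+1)
  have hQ2 := den_ge_one hα (k+2)
  have hQ3 := den_ge_one hα (k+3)
  have hQ4 := den_ge_one hα (k+4)
  have hq0 : (1:ℝ) ≤ (cfDen α (k+1) : ℝ) := by exact_mod_cast hQ1
  have hq01 : (cfDen α (k+1) : ℝ) + 1 ≤ (cfDen α (k+2) : ℝ) := by
    exact_mod_cast den_strict hα k
  have hy1 : 1 < cfTail α (k+4) := tail_gt_one hα (k+3)
  have hy0 : (0:ℝ) < cfTail α (k+4) := by linarith
  have hx1 : 1 < cfTail α (k+3) := tail_gt_one hα (k+2)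
  have haZ : (cfDigit α (k+3) : ℝ) = 2 ∨ 3 ≤ (cfDigit α (k+3) : ℝ) := by
    rcases (by omega : cfDigit α (k+3) = 2 ∨ 3 ≤ cfDigit α (k+3)) with h | h
    · left; exact_mod_cast h
    · right; exact_mod_cast h
  have hq2Z : cfDen α (k+3) = cfDigit α (k+3) * cfDen α (k+2) + cfDen α (k+1) := rfl
  have hq2 : (cfDen α (k+3) : ℝ)
      = (cfDigit α (k+3) : ℝ) * (cfDen α (k+2) : ℝ) + (cfDen α (k+1) : ℝ) := by
    exact_mod_cast hq2Z
  have hBpos : 0 < (cfDen α (k+2) : ℝ) * cfTail α (k+3) + (cfDen α (k+1) : ℝ) :=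
    Bpos hα (k+1)
  have hB0pos : 0 < (cfDen α (k+1) : ℝ) * cfTail α (k+2) + (cfDen α k : ℝ) := Bpos hα k
  have hB2pos : 0 < (cfDen α (k+3) : ℝ) * cfTail α (k+4) + (cfDen α (k+2) : ℝ) :=
    Bpos hα (k+2)
  have hE0 : ((cfDen α (k+1) : ℝ) * α - (cfNum α (k+1) : ℝ))
      * ((cfDen α (k+1) : ℝ) * cfTail α (k+2) + (cfDen α k : ℝ)) = (-1:ℝ)^(k+1) :=
    err hα k
  have hE1 : ((cfDen α (k+2) : ℝ) * α - (cfNum α (k+2) : ℝ))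
      * ((cfDen α (k+2) : ℝ) * cfTail α (k+3) + (cfDen α (k+1) : ℝ)) = -(-1:ℝ)^(k+1) := by
    have h := err hα (k+1)
    have he : ((-1:ℝ))^(k+1+1) = -(-1:ℝ)^(k+1) := by rw [pow_succ]; ring
    rw [he] at h; exact h
  have hE2 : ((cfDen α (k+3) : ℝ) * α - (cfNum α (k+3) : ℝ))
      * ((cfDen α (k+3) : ℝ) * cfTail α (k+4) + (cfDen α (k+2) : ℝ)) = (-1:ℝ)^(k+1) := by
    have h := err hα (k+2)
    have he : ((-1:ℝ))^(k+2+1) = (-1:ℝ)^(k+1) := by rw [pow_succ, pow_succ]; ring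
    rw [he] at h; exact h
  have hBx : (cfDen α (k+2) : ℝ) * cfTail α (k+3) + (cfDen α (k+1) : ℝ)
      = ((cfDen α (k+1) : ℝ) * cfTail α (k+2) + (cfDen α k : ℝ)) * cfTail α (k+3) :=
    Bmul hα k
  have hB2y : (cfDen α (k+3) : ℝ) * cfTail α (k+4) + (cfDen α (k+2) : ℝ)
      = ((cfDen α (k+2) : ℝ) * cfTail α (k+3) + (cfDen α (k+1) : ℝ)) * cfTail α (k+4) :=
    Bmul hα (k+1)
  have hεabs := neg_one_pow_abs (k+1)
  rcases core_disj (Real.sqrt 17) (cfDigit α (k+3) : ℝ) (cfDen α (k+1) : ℝ)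
      (cfDen α (k+2) : ℝ) (cfTail α (k+3)) (cfTail α (k+4))
      ((cfDen α (k+2) : ℝ) * cfTail α (k+3) + (cfDen α (k+1) : ℝ)) (cfDen α (k+3) : ℝ)
      hs hs4 haZ hq0 hq01 hy1 (tail_eq (α := α) (k+3)) rfl (by rw [hq2])
    with h1 | h2 | h3 | ⟨ha2, hyy⟩
  · -- doubled convergent at k+2
    refine ⟨2 * cfNum α (k+2), 2 * cfDen α (k+2), by omega, by omega,
      not_conv_double hα (k+2), ?_⟩
    have hc1 : ((2 * cfDen α (k+2) : ℤ) : ℝ) = 2 * (cfDen α (k+2) : ℝ) := by push_cast; ring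
    have hc2 : ((2 * cfNum α (k+2) : ℤ) : ℝ) = 2 * (cfNum α (k+2) : ℝ) := by push_cast; ring
    rw [hc1, hc2]
    exact case_double (by positivity) hBpos hεabs hE1 h1
  · -- mediant
    refine ⟨cfNum α (k+1) + cfNum α (k+2), cfDen α (k+1) + cfDen α (k+2), by omega, by omega,
      not_conv_between hα (j := k+2) (by omega) ?_, ?_⟩
    · -- q < Q(k+3)
      have := mul_le_mul_of_nonneg_right haD (by omega : (0:ℤ) ≤ cfDen α (k+2))
      have hnn : cfDen α (k+2+1) = cfDen α (k+3) := rfl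
      omega
    · have hc1 : ((cfDen α (k+1) + cfDen α (k+2) : ℤ) : ℝ)
          = (cfDen α (k+1) : ℝ) + (cfDen α (k+2) : ℝ) := by push_cast; ring
      have hc2 : ((cfNum α (k+1) + cfNum α (k+2) : ℤ) : ℝ)
          = (cfNum α (k+1) : ℝ) + (cfNum α (k+2) : ℝ) := by push_cast; ring
      rw [hc1, hc2]
      exact case_mediant hB0pos hBpos hx1 hεabs hE0 hE1 hBx h2
  · -- difference
    refine ⟨cfNum α (k+3) - cfNum α (k+2), cfDen α (k+3) - cfDen α (k+2), ?_, ?_,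
      not_conv_between hα (j := k+2) ?_ ?_, ?_⟩
    · have := mul_le_mul_of_nonneg_right haD (by omega : (0:ℤ) ≤ cfDen α (k+2))
      omega
    · have := mul_le_mul_of_nonneg_right haD (by omega : (0:ℤ) ≤ cfDen α (k+2))
      omega
    · have := mul_le_mul_of_nonneg_right haD (by omega : (0:ℤ) ≤ cfDen α (k+2))
      omega
    · have hnn : cfDen α (k+2+1) = cfDen α (k+3) := rfl
      omega
    · have hc1 : ((cfDen α (k+3) - cfDen α (k+2) : ℤ) : ℝ)
          = (cfDen α (k+3) : ℝ) - (cfDen α (k+2) : ℝ) := by push_cast; ring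
      have hc2 : ((cfNum α (k+3) - cfNum α (k+2) : ℤ) : ℝ)
          = (cfNum α (k+3) : ℝ) - (cfNum α (k+2) : ℝ) := by push_cast; ring
      rw [hc1, hc2]
      exact case_diff hBpos hB2pos hy0 hεabs hE1 hE2 hB2y h3
  · -- escape: digit k+4 is 1, tail (k+5) is large
    have hfl : cfDigit α (k+4) = 1 := by
      rw [show cfDigit α (k+4) = ⌊cfTail α (k+4)⌋ from rfl, Int.floor_eq_iff]
      constructor
      · push_cast; linarith
      · push_cast
        have : 1 / Real.sqrt 17 < 1 := by
          rw [div_lt_one hs0]; linarith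
        linarith
    have hz1 : 1 < cfTail α (k+5) := tail_gt_one hα (k+4)
    have hz0 : (0:ℝ) < cfTail α (k+5) := by linarith
    have hzinv : (cfTail α (k+5))⁻¹ = cfTail α (k+4) - 1 := by
      have h := tail_eq (α := α) (k+4)
      rw [hfl] at h
      push_cast at h
      linarith
    have hzz : (cfTail α (k+4) - 1) * cfTail α (k+5) = 1 := by
      rw [← hzinv]; exact inv_mul_cancel₀ (ne_of_gt hz0)
    have hsz : Real.sqrt 17 < cfTail α (k+5) := by
      have hy1m : 0 < cfTail α (k+4) - 1 := by linarith
      have hlt : (cfTail α (k+4) - 1) * Real.sqrt 17 < 1 := by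
        have : cfTail α (k+4) - 1 < 1 / Real.sqrt 17 := by linarith
        calc (cfTail α (k+4) - 1) * Real.sqrt 17 < (1 / Real.sqrt 17) * Real.sqrt 17 :=
              mul_lt_mul_of_pos_right this hs0
          _ = 1 := by field_simp
      nlinarith [hzz]
    -- doubled convergent at k+4
    have hB4pos : 0 < (cfDen α (k+4) : ℝ) * cfTail α (k+5) + (cfDen α (k+3) : ℝ) :=
      Bpos hα (k+3)
    have hE4 : ((cfDen α (k+4) : ℝ) * α - (cfNum α (k+4) : ℝ))
        * ((cfDen α (k+4) : ℝ) * cfTail α (k+5) + (cfDen α (k+3) : ℝ))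
        = -(-(-1:ℝ)^(k+3+1)) := by
      have h := err hα (k+3); rw [h]; ring
    have hq4p : (0:ℝ) < (cfDen α (k+4) : ℝ) := by exact_mod_cast lt_of_lt_of_le one_pos hQ4
    have hq3' : (1:ℝ) ≤ (cfDen α (k+3) : ℝ) := by exact_mod_cast hQ3
    refine ⟨2 * cfNum α (k+4), 2 * cfDen α (k+4), ?_, by omega,
      not_conv_double hα (k+4), ?_⟩
    · have := den_mono hα (show k+2 ≤ k+4 by omega)
      omega
    · have hc1 : ((2 * cfDen α (k+4) : ℤ) : ℝ) = 2 * (cfDen α (k+4) : ℝ) := by push_cast; ring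
      have hc2 : ((2 * cfNum α (k+4) : ℤ) : ℝ) = 2 * (cfNum α (k+4) : ℝ) := by push_cast; ring
      rw [hc1, hc2]
      apply case_double hq4p.le hB4pos (by rw [abs_neg]; exact neg_one_pow_abs (k+4)) hE4
      -- 4 * q4 / B4 ≤ 4 / √17
      rw [div_le_div_iff₀ hB4pos hs0]
      have key := mul_lt_mul_of_pos_left hsz hq4p
      linarith [hq3']


/-- If `α` is irrational and not equivalent to the golden ratio, then `𝔨(α) ≤ 4/√17`. -/
theorem stmt_1 (α : ℝ) (hα : Irrational α)
    (h : ¬ CFEquiv α ((1 + Real.sqrt 5) / 2)) :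
    kConst α ≤ 4 / Real.sqrt 17 := by
  rw [kConst]
  apply liminf_le_of_frequently_le
  · rw [frequently_atTop]
    intro b
    obtain ⟨N, hN⟩ := exists_nat_ge b
    obtain ⟨j, hj3, hjd⟩ := exists_big_digit hα h N
    obtain ⟨k, rfl⟩ : ∃ k, j = k + 3 := ⟨j - 3, by omega⟩
    obtain ⟨p, q, hqQ, hq1, hne, hbound⟩ := exists_candidate hα k hjd
    refine ⟨(q : ℝ), ?_, ?_⟩
    · have h1 : ((k:ℤ) + 1) ≤ cfDen α (k+2) := by
        have := den_ge_index hα (k+1); exact_mod_cast this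
      have h2 : (N : ℤ) ≤ q := by omega
      calc b ≤ (N : ℝ) := hN
        _ ≤ (q : ℝ) := by exact_mod_cast h2
    · have hple := psi2_le hq1 (le_refl _) hne
      have hq0 : (0:ℝ) ≤ (q:ℝ) := by positivity
      calc (q:ℝ) * psi2 α (q:ℝ) ≤ (q:ℝ) * |(q:ℝ) * α - (p:ℝ)| :=
            mul_le_mul_of_nonneg_left hple hq0
        _ ≤ 4 / Real.sqrt 17 := hbound
  · refine ⟨0, ?_⟩
    rw [eventually_map]
    filter_upwards [eventually_ge_atTop (0:ℝ)] with t ht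
    exact mul_nonneg ht (psi2_nonneg α t)
end

section
/- Let α be an irrational number not equivalent to (1+√5)/2 and not equivalent to (1+√17)/2. If in its continued fraction expansion aₙ ≤ 4 for all sufficiently large n and aₙ = 2 for infinitely many n, then 𝔨(α) ≤ √2 − 1/2. -/
open Filter

namespace Aux13

variable {α : ℝ}

lemma tail_irrational (hα : Irrational α) : ∀ n, Irrational (cfTail α n)
  | 0 => hα
  | n + 1 => by
    have h := tail_irrational hα n
    have h2 : Irrational (Int.fract (cfTail α n)) := by
      rw [Int.fract]
      exact Irrational.sub_intCast h _
    exact h2.inv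

lemma fract_tail_pos (hα : Irrational α) (n : ℕ) : 0 < Int.fract (cfTail α n) :=
  Int.fract_pos.mpr ((tail_irrational hα n).ne_int _)

lemma one_lt_tail (hα : Irrational α) (n : ℕ) : 1 < cfTail α (n + 1) := by
  have h1 := fract_tail_pos hα n
  have h2 : Int.fract (cfTail α n) < 1 := Int.fract_lt_one _
  rw [show cfTail α (n + 1) = (Int.fract (cfTail α n))⁻¹ from rfl]
  exact (one_lt_inv₀ h1).mpr h2

lemma tail_pos (hα : Irrational α) (n : ℕ) : 0 < cfTail α (n + 1) :=
  lt_trans one_pos (one_lt_tail hα n)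

lemma one_le_digit (hα : Irrational α) (n : ℕ) : 1 ≤ cfDigit α (n + 1) :=
  Int.le_floor.mpr (by exact_mod_cast (one_lt_tail hα n).le)

lemma tail_eq (hα : Irrational α) (n : ℕ) :
    cfTail α n = (cfDigit α n : ℝ) + (cfTail α (n + 1))⁻¹ := by
  have h := fract_tail_pos hα n
  rw [show cfTail α (n + 1) = (Int.fract (cfTail α n))⁻¹ from rfl, inv_inv, cfDigit,
    Int.floor_add_fract]

lemma tail_lt (n : ℕ) : cfTail α n < (cfDigit α n : ℝ) + 1 := Int.lt_floor_add_one _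


lemma den_pos (hα : Irrational α) : ∀ n, 1 ≤ cfDen α n := by
  intro n
  induction n using Nat.strong_induction_on with
  | _ n ih =>
    match n with
    | 0 => simp [cfDen]
    | 1 => simpa [cfDen] using one_le_digit hα 0
    | n + 2 =>
      have h1 := ih (n + 1) (by omega)
      have h0 := ih n (by omega)
      have hd := one_le_digit hα (n + 1)
      show 1 ≤ cfDigit α (n + 2) * cfDen α (n + 1) + cfDen α n
      nlinarith

lemma den_succ_le (hα : Irrational α) : ∀ n, cfDen α n ≤ cfDen α (n + 1) := by
  intro n
  match n with
  | 0 => simpa [cfDen] using one_le_digit hα 0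
  | n + 1 =>
    have h1 := den_pos hα (n + 1)
    have h0 := den_pos hα n
    have hd := one_le_digit hα (n + 1)
    show cfDen α (n + 1) ≤ cfDigit α (n + 2) * cfDen α (n + 1) + cfDen α n
    nlinarith

lemma den_mono (hα : Irrational α) : Monotone (cfDen α) :=
  monotone_nat_of_le_succ (den_succ_le hα)

lemma den_ge (hα : Irrational α) : ∀ n : ℕ, (n : ℤ) ≤ cfDen α n := by
  intro n
  induction n using Nat.strong_induction_on with
  | _ n ih =>
    match n with
    | 0 => simp [cfDen]
    | 1 => simpa [cfDen] using one_le_digit hα 0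
    | n + 2 =>
      have h1 := ih (n + 1) (by omega)
      have h0 := den_pos hα n
      have hd := one_le_digit hα (n + 1)
      have h2 := den_pos hα (n + 1)
      show ((n : ℤ) + 2) ≤ cfDigit α (n + 2) * cfDen α (n + 1) + cfDen α n
      push_cast at h1 ⊢
      nlinarith

lemma det_eq (n : ℕ) :
    cfNum α (n + 1) * cfDen α n - cfNum α n * cfDen α (n + 1) = (-1) ^ n := by
  induction n with
  | zero => simp [cfNum, cfDen]; ring
  | succ n ih =>
    have e1 : cfNum α (n + 2) = cfDigit α (n + 2) * cfNum α (n + 1) + cfNum α n := rfl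
    have e2 : cfDen α (n + 2) = cfDigit α (n + 2) * cfDen α (n + 1) + cfDen α n := rfl
    show cfNum α (n + 2) * cfDen α (n + 1) - cfNum α (n + 1) * cfDen α (n + 2) = (-1) ^ (n + 1)
    rw [e1, e2]
    ring_nf
    ring_nf at ih
    linarith [ih]


noncomputable def Dd (α : ℝ) (n : ℕ) : ℝ := (cfDen α n : ℝ) * α - (cfNum α n : ℝ)

lemma D_zero (hα : Irrational α) : Dd α 0 = (cfTail α 1)⁻¹ := by
  have h := tail_eq hα 0
  simp only [Dd, cfDen, cfNum]
  push_cast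
  rw [show cfTail α 0 = α from rfl] at h
  linarith

lemma D_rec (hα : Irrational α) : ∀ n, Dd α (n + 1) * cfTail α (n + 2) = -Dd α n := by
  intro n
  induction n with
  | zero =>
    have h0 := tail_eq hα 0
    have h1 := tail_eq hα 1
    have p1 := tail_pos hα 0
    have p2 := tail_pos hα 1
    have hz := D_zero hα
    rw [show cfTail α 0 = α from rfl] at h0
    have hx1 : cfTail α 1 ≠ 0 := by have := tail_pos hα 0; linarith
    have hx2 : cfTail α 2 ≠ 0 := by have := tail_pos hα 1; linarith
    simp only [Dd, cfNum, cfDen]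
    push_cast
    show (_ * α - _) * cfTail α (0 + 2) = -(1 * α - _)
    norm_num at h1 ⊢
    set x1 := cfTail α 1 with hx1d
    set x2 := cfTail α 2 with hx2d
    set a0 := (cfDigit α 0 : ℝ) with ha0
    set a1 := (cfDigit α 1 : ℝ) with ha1
    have hd1 : a1 = x1 - x2⁻¹ := by rw [h1]; ring
    rw [hd1, h0]
    field_simp
    ring
  | succ n ih =>
    have e1 : cfNum α (n + 2) = cfDigit α (n + 2) * cfNum α (n + 1) + cfNum α n := rfl
    have e2 : cfDen α (n + 2) = cfDigit α (n + 2) * cfDen α (n + 1) + cfDen α n := rfl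
    have hrec : Dd α (n + 2) = (cfDigit α (n + 2) : ℝ) * Dd α (n + 1) + Dd α n := by
      simp only [Dd, e1, e2]; push_cast; ring
    have ht := tail_eq hα (n + 2)
    have p2 := tail_pos hα (n + 1)
    have p3 := tail_pos hα (n + 2)
    have hd : (cfDigit α (n + 2) : ℝ) = cfTail α (n + 2) - (cfTail α (n + 3))⁻¹ := by
      rw [ht]; ring
    have hn : Dd α n = -(Dd α (n + 1) * cfTail α (n + 2)) := by linarith [ih]
    have hx3 : cfTail α (n + 3) ≠ 0 := by linarith
    rw [hrec, hd, hn]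
    show _ * cfTail α (n + 3) = _
    field_simp
    ring

/-- `|D_{n+1}| * (q_{n+2} + q_{n+1}/x_{n+3}) = 1`. -/
lemma abs_D (hα : Irrational α) (n : ℕ) :
    |Dd α (n + 1)| * ((cfDen α (n + 2) : ℝ) + (cfDen α (n + 1) : ℝ) / cfTail α (n + 3)) = 1 := by
  have hx : 0 < cfTail α (n + 3) := tail_pos hα (n + 2)
  have hrec := D_rec hα (n + 1)
  have hD2 : Dd α (n + 2) = -Dd α (n + 1) / cfTail α (n + 3) := by
    field_simp
    linarith [hrec]
  have hdet : (cfNum α (n + 2) : ℝ) * (cfDen α (n + 1) : ℝ)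
      - (cfNum α (n + 1) : ℝ) * (cfDen α (n + 2) : ℝ) = (-1) ^ (n + 1) := by
    exact_mod_cast congrArg (Int.cast : ℤ → ℝ) (det_eq (n + 1))
  have hkey : Dd α (n + 1) * ((cfDen α (n + 2) : ℝ) + (cfDen α (n + 1) : ℝ) / cfTail α (n + 3))
      = (-1) ^ (n + 1) := by
    have expand : Dd α (n + 1) * (cfDen α (n + 2) : ℝ) - Dd α (n + 2) * (cfDen α (n + 1) : ℝ)
        = (-1) ^ (n + 1) := by
      simp only [Dd]
      linear_combination hdet
    rw [hD2] at expand
    field_simp at expand ⊢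
    linarith [expand]
  have := congrArg abs hkey
  rw [abs_mul] at this
  have hG : 0 ≤ (cfDen α (n + 2) : ℝ) + (cfDen α (n + 1) : ℝ) / cfTail α (n + 3) := by
    have h1 := den_pos hα (n + 2)
    have h2 := den_pos hα (n + 1)
    have : (0:ℝ) < (cfDen α (n + 1) : ℝ) / cfTail α (n + 3) := by
      apply div_pos _ hx
      exact_mod_cast lt_of_lt_of_le one_pos (by exact_mod_cast h2)
    have : (1:ℝ) ≤ (cfDen α (n + 2) : ℝ) := by exact_mod_cast h1
    linarith
  rw [abs_of_nonneg hG] at this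
  simpa using this


/-- Candidate `(p_{k+5}+p_{k+4}, q_{k+5}+q_{k+4})`, reduced to a numeric inequality. -/
lemma keyA (hα : Irrational α) (k : ℕ) (h2 : cfDigit α (k + 6) = 2)
    (hval : ((cfDen α (k + 5) : ℝ) + (cfDen α (k + 4) : ℝ)) * (1 + (cfTail α (k + 7))⁻¹)
      ≤ 99 / 109 * (2 * (cfDen α (k + 5) : ℝ) + (cfDen α (k + 4) : ℝ)
          + (cfDen α (k + 5) : ℝ) * (cfTail α (k + 7))⁻¹)) :
    ∃ p q : ℤ, 1 ≤ q ∧ (k : ℝ) ≤ (q : ℝ) ∧ (∀ n, (p, q) ≠ (cfNum α n, cfDen α n)) ∧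
      (q : ℝ) * |(q : ℝ) * α - (p : ℝ)| ≤ 99 / 109 := by
  have hQ := den_pos hα (k + 5)
  have hR := den_pos hα (k + 4)
  refine ⟨cfNum α (k + 5) + cfNum α (k + 4), cfDen α (k + 5) + cfDen α (k + 4), by omega, ?_, ?_, ?_⟩
  · have h5 := den_ge hα (k + 5)
    have : (k : ℤ) ≤ cfDen α (k + 5) + cfDen α (k + 4) := by omega
    exact_mod_cast this
  · intro n h
    have hsnd : cfDen α (k + 5) + cfDen α (k + 4) = cfDen α n := congrArg Prod.snd h
    rcases le_or_gt n (k + 5) with hn | hn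
    · have := den_mono hα hn
      omega
    · have h6 : k + 6 ≤ n := hn
      have := den_mono hα h6
      have e6 : cfDen α (k + 6) = cfDigit α (k + 6) * cfDen α (k + 5) + cfDen α (k + 4) := rfl
      rw [h2] at e6
      omega
  · -- quantitative bound
    have hx6 : cfTail α (k + 6) = 2 + (cfTail α (k + 7))⁻¹ := by
      have := tail_eq hα (k + 6)
      rw [h2] at this
      push_cast at this
      convert this using 3 <;> omega
    have hu0 : 0 < (cfTail α (k + 7))⁻¹ := inv_pos.mpr (tail_pos hα (k + 6))
    -- value of the linear form
    have hvalue : ((cfDen α (k + 5) : ℝ) + (cfDen α (k + 4) : ℝ)) * α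
        - ((cfNum α (k + 5) : ℝ) + (cfNum α (k + 4) : ℝ)) = Dd α (k + 5) + Dd α (k + 4) := by
      simp only [Dd]; ring
    have hs : Dd α (k + 4) = -(Dd α (k + 5) * cfTail α (k + 6)) := by
      have := D_rec hα (k + 4)
      have e : k + 4 + 1 = k + 5 := rfl
      have e2 : k + 4 + 2 = k + 6 := rfl
      rw [e, e2] at this
      linarith
    have habs : |Dd α (k + 5) + Dd α (k + 4)| = |Dd α (k + 5)| * (1 + (cfTail α (k + 7))⁻¹) := by
      rw [hs, hx6]
      have : Dd α (k + 5) + -(Dd α (k + 5) * (2 + (cfTail α (k + 7))⁻¹))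
          = -(Dd α (k + 5) * (1 + (cfTail α (k + 7))⁻¹)) := by ring
      rw [this, abs_neg, abs_mul, abs_of_pos (by linarith : (0:ℝ) < 1 + (cfTail α (k + 7))⁻¹)]
    have hG := abs_D hα (k + 4)
    have e5 : k + 4 + 1 = k + 5 := rfl
    have e6' : k + 4 + 2 = k + 6 := rfl
    have e7 : k + 4 + 3 = k + 7 := rfl
    rw [e5, e6', e7] at hG
    have hq6 : (cfDen α (k + 6) : ℝ) = 2 * (cfDen α (k + 5) : ℝ) + (cfDen α (k + 4) : ℝ) := by
      have e6 : cfDen α (k + 6) = cfDigit α (k + 6) * cfDen α (k + 5) + cfDen α (k + 4) := rfl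
      rw [h2] at e6
      exact_mod_cast congrArg (Int.cast : ℤ → ℝ) e6
    have hdivu : (cfDen α (k + 5) : ℝ) / cfTail α (k + 7)
        = (cfDen α (k + 5) : ℝ) * (cfTail α (k + 7))⁻¹ := div_eq_mul_inv _ _
    rw [hq6, hdivu] at hG
    -- assemble
    push_cast
    rw [hvalue, habs]
    set u := (cfTail α (k + 7))⁻¹
    set Q := (cfDen α (k + 5) : ℝ)
    set R := (cfDen α (k + 4) : ℝ)
    set D := |Dd α (k + 5)|
    have hDnn : 0 ≤ D := abs_nonneg _
    calc (Q + R) * (D * (1 + u)) = (Q + R) * (1 + u) * D := by ring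
      _ ≤ 99 / 109 * (2 * Q + R + Q * u) * D := by
          apply mul_le_mul_of_nonneg_right hval hDnn
      _ = 99 / 109 * (D * (2 * Q + R + Q * u)) := by ring
      _ = 99 / 109 := by rw [hG]; ring

lemma key (hα : Irrational α) (k : ℕ)
    (hb4 : cfDigit α (k + 4) ≤ 4) (hb8 : cfDigit α (k + 8) ≤ 4)
    (h2 : cfDigit α (k + 6) = 2) :
    ∃ p q : ℤ, 1 ≤ q ∧ (k : ℝ) ≤ (q : ℝ) ∧ (∀ n, (p, q) ≠ (cfNum α n, cfDen α n)) ∧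
      (q : ℝ) * |(q : ℝ) * α - (p : ℝ)| ≤ 99 / 109 := by
  have hQ1 : (1:ℝ) ≤ (cfDen α (k + 5) : ℝ) := by exact_mod_cast den_pos hα (k + 5)
  have hR1 : (1:ℝ) ≤ (cfDen α (k + 4) : ℝ) := by exact_mod_cast den_pos hα (k + 4)
  have hu0 : 0 < (cfTail α (k + 7))⁻¹ := inv_pos.mpr (tail_pos hα (k + 6))
  have hu1 : (cfTail α (k + 7))⁻¹ < 1 := by
    rw [inv_lt_one_iff₀]; right; exact one_lt_tail hα (k + 6)
  have ha5' : 1 ≤ cfDigit α (k + 5) := by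
    have h := one_le_digit hα (k + 4); rwa [show k + 4 + 1 = k + 5 from rfl] at h
  have ha7' : 1 ≤ cfDigit α (k + 7) := by
    have h := one_le_digit hα (k + 6); rwa [show k + 6 + 1 = k + 7 from rfl] at h
  rcases le_or_gt 2 (cfDigit α (k + 5)) with hc1 | hc1
  · -- Case C1 : a_{m-1} ≥ 2
    apply keyA hα k h2
    have hrec : cfDen α (k + 5) = cfDigit α (k + 5) * cfDen α (k + 4) + cfDen α (k + 3) := rfl
    have hS := den_pos hα (k + 3)
    have hR0 := den_pos hα (k + 4)
    have hQ2R : 2 * (cfDen α (k + 4)) ≤ cfDen α (k + 5) := by nlinarith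
    have hQ2R' : 2 * (cfDen α (k + 4) : ℝ) ≤ (cfDen α (k + 5) : ℝ) := by exact_mod_cast hQ2R
    nlinarith [mul_nonneg (sub_nonneg.2 hu1.le)
      (by linarith : (0:ℝ) ≤ 10 * (cfDen α (k + 5) : ℝ) + 109 * (cfDen α (k + 4) : ℝ))]
  · -- a_{m-1} = 1
    have ha5 : cfDigit α (k + 5) = 1 := by omega
    have hQR : cfDen α (k + 4) ≤ cfDen α (k + 5) := den_mono hα (by omega)
    have hQR' : ((cfDen α (k + 4) : ℤ) : ℝ) ≤ ((cfDen α (k + 5) : ℤ) : ℝ) := by exact_mod_cast hQR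
    rcases le_or_gt 2 (cfDigit α (k + 7)) with hc2 | hc2
    · -- Case C2 : a_{m+1} ≥ 2
      apply keyA hα k h2
      have hx : (2:ℝ) ≤ cfTail α (k + 7) := by
        have hf : ((cfDigit α (k + 7) : ℤ) : ℝ) ≤ cfTail α (k + 7) := Int.floor_le _
        have : (2:ℝ) ≤ ((cfDigit α (k + 7) : ℤ) : ℝ) := by exact_mod_cast hc2
        linarith
      have hu12 : (cfTail α (k + 7))⁻¹ ≤ 1 / 2 := by
        rw [inv_le_comm₀ (by linarith : (0:ℝ) < cfTail α (k + 7)) (by norm_num)]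
        linarith
      nlinarith [mul_nonneg (sub_nonneg.2 hu12)
        (by linarith : (0:ℝ) ≤ 10 * (cfDen α (k + 5) : ℝ) + 109 * (cfDen α (k + 4) : ℝ))]
    · have ha7 : cfDigit α (k + 7) = 1 := by omega
      rcases le_or_gt (cfDigit α (k + 8)) 3 with hc3 | hc3
      · -- Case C3 : a_{m+2} ≤ 3
        apply keyA hα k h2
        have hrecQ : cfDen α (k + 5) = cfDigit α (k + 5) * cfDen α (k + 4) + cfDen α (k + 3) := rfl
        rw [ha5, one_mul] at hrecQ
        have hrecR : cfDen α (k + 4) = cfDigit α (k + 4) * cfDen α (k + 3) + cfDen α (k + 2) := rfl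
        have hSS : cfDen α (k + 2) ≤ cfDen α (k + 3) := den_mono hα (by omega)
        have hS1 := den_pos hα (k + 3)
        have hS0 := den_pos hα (k + 2)
        have h65 : 6 * cfDen α (k + 4) ≤ 5 * cfDen α (k + 5) := by nlinarith
        have h65' : 6 * (cfDen α (k + 4) : ℝ) ≤ 5 * (cfDen α (k + 5) : ℝ) := by exact_mod_cast h65
        have hx8 : cfTail α (k + 8) < 4 := by
          have hlt := tail_lt (α := α) (k + 8)
          have hle : ((cfDigit α (k + 8) : ℤ) : ℝ) + 1 ≤ 4 := by exact_mod_cast by omega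
          linarith
        have hx8p : 0 < cfTail α (k + 8) := tail_pos hα (k + 7)
        have hx7 : (5:ℝ)/4 < cfTail α (k + 7) := by
          have h7 := tail_eq hα (k + 7)
          rw [ha7] at h7
          rw [show k + 7 + 1 = k + 8 from rfl] at h7
          have hinv : (1:ℝ)/4 < (cfTail α (k + 8))⁻¹ := by
            rw [show (1:ℝ)/4 = (4:ℝ)⁻¹ by norm_num, inv_lt_inv₀ (by norm_num) hx8p]
            exact hx8
          push_cast at h7
          linarith
        have hu45 : (cfTail α (k + 7))⁻¹ ≤ 4 / 5 := by
          rw [inv_le_comm₀ (by linarith : (0:ℝ) < cfTail α (k + 7)) (by norm_num)]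
          linarith
        nlinarith [mul_nonneg (sub_nonneg.2 hu45)
          (by linarith : (0:ℝ) ≤ 10 * (cfDen α (k + 5) : ℝ) + 109 * (cfDen α (k + 4) : ℝ))]
      · -- Case C4 : a_{m+2} = 4 ; doubled convergent
        have ha8 : cfDigit α (k + 8) = 4 := by omega
        refine ⟨2 * cfNum α (k + 7), 2 * cfDen α (k + 7), by have := den_pos hα (k + 7); omega,
          ?_, ?_, ?_⟩
        · have h7 := den_ge hα (k + 7)
          have hle : (k : ℤ) ≤ 2 * cfDen α (k + 7) := by omega
          exact_mod_cast hle
        · intro n h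
          have h1 : 2 * cfNum α (k + 7) = cfNum α n := congrArg Prod.fst h
          have h2' : 2 * cfDen α (k + 7) = cfDen α n := congrArg Prod.snd h
          have hd := det_eq (α := α) n
          have hpar : (-1 : ℤ) ^ n = 1 ∨ (-1 : ℤ) ^ n = -1 := neg_one_pow_eq_or ℤ n
          have hdvd : (2:ℤ) ∣ (-1) ^ n := by
            refine ⟨cfNum α (n + 1) * cfDen α (k + 7) - cfNum α (k + 7) * cfDen α (n + 1), ?_⟩
            rw [← hd, ← h1, ← h2']
            ring
          rcases hdvd with ⟨c, hc⟩
          omega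
        · have hG := abs_D hα (k + 6)
          rw [show k + 6 + 1 = k + 7 from rfl, show k + 6 + 2 = k + 8 from rfl,
            show k + 6 + 3 = k + 9 from rfl] at hG
          have hq8 : (cfDen α (k + 8) : ℝ) = 4 * (cfDen α (k + 7) : ℝ) + (cfDen α (k + 6) : ℝ) := by
            have e : cfDen α (k + 8) = cfDigit α (k + 8) * cfDen α (k + 7) + cfDen α (k + 6) := rfl
            rw [ha8] at e
            exact_mod_cast congrArg (Int.cast : ℤ → ℝ) e
          have hq7 : (cfDen α (k + 7) : ℝ) ≤ 2 * (cfDen α (k + 6) : ℝ) := by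
            have e : cfDen α (k + 7) = cfDigit α (k + 7) * cfDen α (k + 6) + cfDen α (k + 5) := rfl
            rw [ha7, one_mul] at e
            have h56 : cfDen α (k + 5) ≤ cfDen α (k + 6) := den_mono hα (by omega)
            have hle : cfDen α (k + 7) ≤ 2 * cfDen α (k + 6) := by omega
            exact_mod_cast hle
          have hx9 : 0 < cfTail α (k + 9) := tail_pos hα (k + 8)
          have hq7p : (1:ℝ) ≤ (cfDen α (k + 7) : ℝ) := by exact_mod_cast den_pos hα (k + 7)
          have hq6p : (1:ℝ) ≤ (cfDen α (k + 6) : ℝ) := by exact_mod_cast den_pos hα (k + 6)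
          have hdiv0 : 0 ≤ (cfDen α (k + 7) : ℝ) / cfTail α (k + 9) := by positivity
          have hval2 : ((2 * cfDen α (k + 7) : ℤ) : ℝ) * α - ((2 * cfNum α (k + 7) : ℤ) : ℝ)
              = 2 * Dd α (k + 7) := by push_cast [Dd]; ring
          rw [hval2, abs_mul, abs_of_nonneg (by norm_num : (0:ℝ) ≤ 2)]
          have hGpos : 0 < (cfDen α (k + 8) : ℝ) + (cfDen α (k + 7) : ℝ) / cfTail α (k + 9) := by
            rw [hq8]; positivity
          have hgoal : ((2 * cfDen α (k + 7) : ℤ) : ℝ) * (2 * |Dd α (k + 7)|)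
              = 4 * (cfDen α (k + 7) : ℝ) * |Dd α (k + 7)| := by push_cast; ring
          rw [hgoal]
          have hb : 4 * (cfDen α (k + 7) : ℝ) ≤ 99 / 109 *
              ((cfDen α (k + 8) : ℝ) + (cfDen α (k + 7) : ℝ) / cfTail α (k + 9)) := by
            rw [hq8]
            nlinarith
          calc 4 * (cfDen α (k + 7) : ℝ) * |Dd α (k + 7)|
              ≤ 99 / 109 * ((cfDen α (k + 8) : ℝ) + (cfDen α (k + 7) : ℝ) / cfTail α (k + 9))
                * |Dd α (k + 7)| := mul_le_mul_of_nonneg_right hb (abs_nonneg _)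
            _ = 99 / 109 * (|Dd α (k + 7)| *
                ((cfDen α (k + 8) : ℝ) + (cfDen α (k + 7) : ℝ) / cfTail α (k + 9))) := by ring
            _ = 99 / 109 := by rw [hG]; ring

lemma psi2_nonneg (α t : ℝ) : 0 ≤ psi2 α t := by
  apply Real.sInf_nonneg
  rintro x ⟨p, q, -, -, -, rfl⟩
  exact abs_nonneg _

lemma psi2_le (α : ℝ) {t : ℝ} {p q : ℤ} (hq : 1 ≤ q) (hqt : (q : ℝ) ≤ t)
    (hne : ∀ n, (p, q) ≠ (cfNum α n, cfDen α n)) :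
    psi2 α t ≤ |(q : ℝ) * α - (p : ℝ)| := by
  apply csInf_le
  · exact ⟨0, by rintro x ⟨p', q', -, -, -, rfl⟩; exact abs_nonneg _⟩
  · exact ⟨p, q, hq, hqt, hne, rfl⟩

theorem main (hα : Irrational α)
    (hbd : ∀ᶠ n in atTop, cfDigit α n ≤ 4)
    (h2 : ∃ᶠ n in atTop, cfDigit α n = 2) :
    kConst α ≤ Real.sqrt 2 - 1 / 2 := by
  have hconst : (99 / 109 : ℝ) ≤ Real.sqrt 2 - 1 / 2 := by
    nlinarith [Real.sq_sqrt (by norm_num : (0:ℝ) ≤ 2), Real.sqrt_nonneg 2]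
  refine le_trans ?_ hconst
  obtain ⟨N, hN⟩ := eventually_atTop.mp hbd
  apply Filter.liminf_le_of_frequently_le
  · -- frequently t * psi2 α t ≤ 99/109
    rw [Filter.frequently_atTop]
    intro b
    obtain ⟨m, hm, hm2⟩ := (Filter.frequently_atTop.mp h2) (N + 6 + ⌈b⌉₊)
    set k := m - 6 with hk
    have hmk : m = k + 6 := by omega
    obtain ⟨p, q, hq1, hqk, hne, hbound⟩ := key hα k
      (hN (k + 4) (by omega)) (hN (k + 8) (by omega)) (by rw [← hmk]; exact hm2)
    refine ⟨(q : ℝ), ?_, ?_⟩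
    · calc b ≤ (⌈b⌉₊ : ℝ) := Nat.le_ceil b
        _ ≤ (k : ℝ) := by exact_mod_cast by omega
        _ ≤ (q : ℝ) := hqk
    · have hq0 : (0:ℝ) ≤ (q : ℝ) := by exact_mod_cast le_trans zero_le_one hq1
      calc (q : ℝ) * psi2 α (q : ℝ) ≤ (q : ℝ) * |(q : ℝ) * α - (p : ℝ)| :=
            mul_le_mul_of_nonneg_left (psi2_le α hq1 le_rfl hne) hq0
        _ ≤ 99 / 109 := hbound
  · -- bounded below
    refine ⟨0, ?_⟩
    rw [Filter.eventually_map]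
    filter_upwards [Filter.eventually_ge_atTop (0:ℝ)] with t ht
    exact mul_nonneg ht (psi2_nonneg α t)


end Aux13

/-- If `α` is irrational, equivalent neither to `(1+√5)/2` nor to `(1+√17)/2`,
`aₙ ≤ 4` for all sufficiently large `n` and `aₙ = 2` for infinitely many `n`,
then `𝔨(α) ≤ √2 − 1/2`. -/
theorem stmt_13 (α : ℝ) (hα : Irrational α)
    (h5 : ¬ CFEquiv α ((1 + Real.sqrt 5) / 2))
    (h17 : ¬ CFEquiv α ((1 + Real.sqrt 17) / 2))
    (hbd : ∀ᶠ n in atTop, cfDigit α n ≤ 4)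
    (h2 : ∃ᶠ n in atTop, cfDigit α n = 2) :
    kConst α ≤ Real.sqrt 2 - 1 / 2 := by
  exact Aux13.main hα hbd h2
end
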